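/- arXiv:gr-qc/0405102 — 4 statements merged into one kernel-verified Lean document; each statement's English description precedes it below -/
import Mathlib

section
/- For real constants α ≤ β, the functions a(t) = (α - t)^(-1/3)(β - t) and b(t) = (α - t)^(2/3), defined for t < α, satisfy the Bianchi I dust equations 2·b''/b + (b')²/b² = 0 and b''/b + a'b'/(ab) + a''/a = 0. -/
open Real Filter

private lemma rpow_hasDerivAt (α p : ℝ) {t : ℝ} (ht : t < α) :
    HasDerivAt (fun s => (α - s) ^ p) (-p * (α - t) ^ (p - 1)) t := by
  have h1 : HasDerivAt (fun s : ℝ => α - s) (-1) t := by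
    simpa using ((hasDerivAt_id t).const_sub α)
  have h2 : HasDerivAt (fun x : ℝ => x ^ p) (p * (α - t) ^ (p - 1)) (α - t) :=
    Real.hasDerivAt_rpow_const (Or.inl (by linarith))
  exact (h2.comp t h1).congr_deriv (by ring)

/-- The Bianchi I functions a = (α - t)^(-1/3)(β - t), b = (α - t)^(2/3)
satisfy the dust field equations for t < α. -/
theorem bianchiI_dust_solution (α β : ℝ) (hαβ : α ≤ β) (a b : ℝ → ℝ)
    (ha : ∀ t, a t = (α - t) ^ (-(1 : ℝ) / 3) * (β - t))
    (hb : ∀ t, b t = (α - t) ^ ((2 : ℝ) / 3)) :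
    ∀ t < α,
      2 * deriv (deriv b) t / b t + (deriv b t) ^ 2 / (b t) ^ 2 = 0 ∧
      deriv (deriv b) t / b t + deriv a t * deriv b t / (a t * b t)
        + deriv (deriv a) t / a t = 0 := by
  have hbfun : b = fun s => (α - s) ^ ((2:ℝ)/3) := funext hb
  have hafun : a = fun s => (α - s) ^ (-(1:ℝ)/3) * (β - s) := funext ha
  -- first derivatives as explicit functions
  have hbd : ∀ s, s < α → HasDerivAt b (-(2/3) * (α - s) ^ (-(1:ℝ)/3)) s := by
    intro s hs
    rw [hbfun]
    have h := rpow_hasDerivAt α ((2:ℝ)/3) hs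
    have e : (2:ℝ)/3 - 1 = -(1:ℝ)/3 := by norm_num
    rw [e] at h
    exact h
  have had : ∀ s, s < α →
      HasDerivAt a ((1/3) * (α - s) ^ (-(4:ℝ)/3) * (β - s) - (α - s) ^ (-(1:ℝ)/3)) s := by
    intro s hs
    rw [hafun]
    have hf := rpow_hasDerivAt α (-(1:ℝ)/3) hs
    have e : -(1:ℝ)/3 - 1 = -(4:ℝ)/3 := by norm_num
    rw [e] at hf
    have hg : HasDerivAt (fun s : ℝ => β - s) (-1) s := by
      simpa using ((hasDerivAt_id s).const_sub β)
    have h := hf.mul hg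
    exact h.congr_deriv (by ring)
  intro t ht
  have hx : (0:ℝ) < α - t := by linarith
  have hy : (0:ℝ) < β - t := by linarith
  have hmem : Set.Iio α ∈ nhds t := Iio_mem_nhds ht
  -- deriv values at t
  have hdb : deriv b t = -(2/3) * (α - t) ^ (-(1:ℝ)/3) := (hbd t ht).deriv
  have hda : deriv a t = (1/3) * (α - t) ^ (-(4:ℝ)/3) * (β - t) - (α - t) ^ (-(1:ℝ)/3) :=
    (had t ht).deriv
  -- eventual equalities for second derivatives
  have hevb : deriv b =ᶠ[nhds t] fun s => -(2/3) * (α - s) ^ (-(1:ℝ)/3) :=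
    Filter.eventually_of_mem hmem (fun s hs => (hbd s hs).deriv)
  have heva : deriv a =ᶠ[nhds t]
      fun s => (1/3) * (α - s) ^ (-(4:ℝ)/3) * (β - s) - (α - s) ^ (-(1:ℝ)/3) :=
    Filter.eventually_of_mem hmem (fun s hs => (had s hs).deriv)
  -- second derivatives
  have hddb : deriv (deriv b) t = -(2/9) * (α - t) ^ (-(4:ℝ)/3) := by
    rw [hevb.deriv_eq]
    have h := (rpow_hasDerivAt α (-(1:ℝ)/3) ht).const_mul ((-(2/3)) : ℝ)
    have e : -(1:ℝ)/3 - 1 = -(4:ℝ)/3 := by norm_num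
    rw [e] at h
    have h2 : HasDerivAt (fun s => -(2/3) * (α - s) ^ (-(1:ℝ)/3))
        (-(2/9) * (α - t) ^ (-(4:ℝ)/3)) t := by
      exact h.congr_deriv (by ring)
    exact h2.deriv
  have hdda : deriv (deriv a) t =
      (4/9) * (α - t) ^ (-(7:ℝ)/3) * (β - t) - (2/3) * (α - t) ^ (-(4:ℝ)/3) := by
    rw [heva.deriv_eq]
    have h1 := (rpow_hasDerivAt α (-(4:ℝ)/3) ht).const_mul ((1:ℝ)/3)
    have e1 : -(4:ℝ)/3 - 1 = -(7:ℝ)/3 := by norm_num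
    rw [e1] at h1
    have hg : HasDerivAt (fun s : ℝ => β - s) (-1) t := by
      simpa using ((hasDerivAt_id t).const_sub β)
    have h2 := rpow_hasDerivAt α (-(1:ℝ)/3) ht
    have e2 : -(1:ℝ)/3 - 1 = -(4:ℝ)/3 := by norm_num
    rw [e2] at h2
    have h3 := (h1.mul hg).sub h2
    have h4 : HasDerivAt
        (fun s => (1/3) * (α - s) ^ (-(4:ℝ)/3) * (β - s) - (α - s) ^ (-(1:ℝ)/3))
        ((4/9) * (α - t) ^ (-(7:ℝ)/3) * (β - t) - (2/3) * (α - t) ^ (-(4:ℝ)/3)) t := by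
      exact h3.congr_deriv (by ring)
    exact h4.deriv
  -- reduce rpow to powers of an opaque c = (α-t)^(1/3)
  obtain ⟨c, hc_eq⟩ : ∃ c : ℝ, (α - t) ^ ((1:ℝ)/3) = c := ⟨_, rfl⟩
  have hc : 0 < c := hc_eq ▸ Real.rpow_pos_of_pos hx _
  have key : ∀ k : ℕ, (α - t) ^ ((k:ℝ)/3) = c ^ k := by
    intro k
    rw [show ((k:ℝ)/3) = (1/3) * (k:ℝ) by ring, Real.rpow_mul hx.le, hc_eq,
      Real.rpow_natCast]
  have e1 : (α - t) ^ (-(1:ℝ)/3) = (c ^ (1:ℕ))⁻¹ := by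
    rw [← key 1, ← Real.rpow_neg hx.le]; norm_num
  have e2 : (α - t) ^ ((2:ℝ)/3) = c ^ (2:ℕ) := by rw [← key 2]; norm_num
  have e3 : (α - t) ^ (-(4:ℝ)/3) = (c ^ (4:ℕ))⁻¹ := by
    rw [← key 4, ← Real.rpow_neg hx.le]; norm_num
  have e4 : (α - t) ^ (-(7:ℝ)/3) = (c ^ (7:ℕ))⁻¹ := by
    rw [← key 7, ← Real.rpow_neg hx.le]; norm_num
  rw [hdb, hda, hddb, hdda, ha t, hb t, e1, e2, e3, e4]
  constructor
  · field_simp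
    ring
  · have hy' : β - t ≠ 0 := hy.ne'
    field_simp
    ring
end

section
/- The function μ(t) = k/(α - t)² solves the ODE μ'' - (4/μ)(μ')² + 8(α - t)μμ' - μ²/2 - 6(α - t)²μ³ = 0 on t < α if and only if k = 5/4 or k = 4/3. -/
lemma mn_aux (α c : ℝ) (n : ℕ) (hn : 0 < n) (t : ℝ) (ht : t ≠ α) :
    HasDerivAt (fun s => c / (α - s) ^ n) (n * c / (α - t) ^ (n + 1)) t := by
  have h0 : (α - t) ≠ 0 := sub_ne_zero.mpr (Ne.symm ht)
  have h1 : HasDerivAt (fun s : ℝ => (α - s) ^ n) (n * (α - t) ^ (n - 1) * (-1)) t := by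
    have := ((hasDerivAt_id t).const_sub α).fun_pow n
    simpa using this
  have h2 := (hasDerivAt_const t c).fun_div h1 (pow_ne_zero n h0)
  refine h2.congr_deriv ?_
  have hn1 : n - 1 + 1 = n := Nat.succ_pred_eq_of_pos hn
  rw [← hn1, Nat.add_sub_cancel]
  field_simp
  ring

lemma mn_deriv (α c : ℝ) (n : ℕ) (hn : 0 < n) (t : ℝ) (ht : t ≠ α) :
    deriv (fun s => c / (α - s) ^ n) t = n * c / (α - t) ^ (n + 1) :=
  (mn_aux α c n hn t ht).deriv

/-- μ(t) = k/(α - t)² solves the Maartens–Nel ODE on t < α iff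
k = 5/4 or k = 4/3. -/
theorem maartens_nel_particular_solutions (α k : ℝ) (hk : 0 < k) (μ : ℝ → ℝ)
    (hμ : ∀ t, μ t = k / (α - t) ^ 2) :
    (∀ t < α,
      deriv (deriv μ) t - (4 / μ t) * (deriv μ t) ^ 2
        + 8 * (α - t) * μ t * deriv μ t - (μ t) ^ 2 / 2
        - 6 * (α - t) ^ 2 * (μ t) ^ 3 = 0)
    ↔ (k = 5 / 4 ∨ k = 4 / 3) := by
  have hμfun : μ = fun s => k / (α - s) ^ 2 := funext hμ
  have hd1 : ∀ t : ℝ, t ≠ α → deriv μ t = 2 * k / (α - t) ^ 3 := by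
    intro t ht
    rw [hμfun]
    rw [mn_deriv α k 2 (by norm_num) t ht]; norm_num
  have hd2 : ∀ t : ℝ, t < α → deriv (deriv μ) t = 6 * k / (α - t) ^ 4 := by
    intro t ht
    have hev : deriv μ =ᶠ[nhds t] (fun s => 2 * k / (α - s) ^ 3) := by
      filter_upwards [isOpen_Iio.mem_nhds ht] with s hs
      exact hd1 s (ne_of_lt hs)
    rw [hev.deriv_eq]
    rw [mn_deriv α (2 * k) 3 (by norm_num) t (ne_of_lt ht)]; ring
  constructor
  · intro h
    have ht : α - 1 < α := by linarith
    have := h (α - 1) ht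
    rw [hd2 _ ht, hd1 _ (ne_of_lt ht), hμ] at this
    have hs : α - (α - 1) = 1 := by ring
    rw [hs] at this
    simp only [one_pow, div_one] at this
    -- this : 6k - (4/k)*(2k)^2 + 8*1*k*(2k) - k^2/2 - 6*1^2*k^3 = 0
    have hk0 : k ≠ 0 := ne_of_gt hk
    have hfac : -(k / 2) * (4 * k - 5) * (3 * k - 4) = 0 := by
      field_simp at this ⊢
      nlinarith [this]
    rcases mul_eq_zero.mp hfac with h1 | h2
    · rcases mul_eq_zero.mp h1 with h3 | h4
      · exfalso; apply hk0; linarith [neg_eq_zero.mp (by linarith : -(k/2) = 0)]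
      · left; linarith
    · right; linarith
  · intro hk' t ht
    have hs0 : (α - t) ≠ 0 := sub_ne_zero.mpr (ne_of_gt ht)
    have hk0 : k ≠ 0 := ne_of_gt hk
    rw [hd2 t ht, hd1 t (ne_of_lt ht), hμ]
    rcases hk' with h | h <;> subst h <;> field_simp <;> ring
end

section
/- Under the parametric substitution dt = 2b dη with b(η) = C₁cos²η and a(η) = [M(η sin η + cos η) + C₀ sin η]/cos η, the functions a, b satisfy the Bianchi III (k = 1) dust equation 2b_tt/b + (b_t/b)² + 1/b² = 0, where t-derivatives are computed via d/dt = (1/(2b))·d/dη. -/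
/-- the parametric Bianchi III (k = 1) solution satisfies the dust
equation 2 b_tt/b + (b_t/b)² + 1/b² = 0, with d/dt = (1/(2b)) d/dη. -/
theorem bianchiIII_parametric_solution (M C₀ C₁ : ℝ) (hM : 0 < M) (hC₁ : 0 < C₁)
    (a b : ℝ → ℝ)
    (ha : ∀ η, Real.cos η ≠ 0 →
      a η = (M * (η * Real.sin η + Real.cos η) + C₀ * Real.sin η) / Real.cos η)
    (hb : ∀ η, b η = C₁ * Real.cos η ^ 2) :
    ∀ η : ℝ, Real.cos η ≠ 0 →
      2 * ((1 / (2 * b η)) * deriv (fun s => (1 / (2 * b s)) * deriv b s) η) / b η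
        + ((1 / (2 * b η)) * deriv b η / b η) ^ 2 + 1 / (b η) ^ 2 = 0 := by
  have hbfun : b = fun s => C₁ * Real.cos s ^ 2 := funext hb
  subst hbfun
  have hC₁' : C₁ ≠ 0 := ne_of_gt hC₁
  have hderiv : ∀ s : ℝ, deriv (fun u : ℝ => C₁ * Real.cos u ^ 2) s
      = -2 * C₁ * Real.cos s * Real.sin s := by
    intro s
    have h : HasDerivAt (fun u : ℝ => C₁ * Real.cos u ^ 2)
        (C₁ * (2 * Real.cos s ^ 1 * (-Real.sin s))) s :=
      (((Real.hasDerivAt_cos s).pow 2)).const_mul C₁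
    rw [h.deriv]; ring
  have hg : (fun s : ℝ => (1 / (2 * (C₁ * Real.cos s ^ 2)))
      * deriv (fun u : ℝ => C₁ * Real.cos u ^ 2) s) = fun s : ℝ => -Real.tan s := by
    funext s
    rw [hderiv s, Real.tan_eq_sin_div_cos]
    by_cases hc : Real.cos s = 0
    · simp [hc]
    · field_simp
  intro η hc
  rw [hg, hderiv]
  have htan : deriv (fun s : ℝ => -Real.tan s) η = -(1 / Real.cos η ^ 2) :=
    ((Real.hasDerivAt_tan hc).neg).deriv
  rw [htan]
  have hpy : Real.sin η ^ 2 + Real.cos η ^ 2 = 1 := Real.sin_sq_add_cos_sq η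
  field_simp
  linear_combination hpy
end

section
/- Under the parametric substitution dt = 2b dη with b(η) = C₁cosh²η and a(η) = [M(η cosh η - sinh η) + C₀ cosh η]/sinh η, the functions a, b satisfy the Kantowski-Sachs (k = -1) dust equation 2b_tt/b + (b_t/b)² - 1/b² = 0, where t-derivatives are computed via d/dt = (1/(2b))·d/dη. -/
/-- the parametric Kantowski-Sachs (k = -1) solution satisfies the dust
equation 2 b_tt/b + (b_t/b)² - 1/b² = 0, with d/dt = (1/(2b)) d/dη. -/
theorem kantowski_sachs_parametric_solution (M C₀ C₁ : ℝ) (hM : 0 < M) (hC₁ : 0 < C₁)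
    (a b : ℝ → ℝ)
    (ha : ∀ η, Real.sinh η ≠ 0 →
      a η = (M * (η * Real.cosh η - Real.sinh η) + C₀ * Real.cosh η) / Real.sinh η)
    (hb : ∀ η, b η = C₁ * Real.cosh η ^ 2) :
    ∀ η : ℝ, Real.sinh η ≠ 0 →
      2 * ((1 / (2 * b η)) * deriv (fun s => (1 / (2 * b s)) * deriv b s) η) / b η
        + ((1 / (2 * b η)) * deriv b η / b η) ^ 2 - 1 / (b η) ^ 2 = 0 := by
  have hbfun : b = fun s => C₁ * Real.cosh s ^ 2 := funext hb
  have hC₁' : C₁ ≠ 0 := ne_of_gt hC₁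
  have hcosh : ∀ s : ℝ, Real.cosh s ≠ 0 := fun s => (Real.cosh_pos s).ne'
  have hderivb : deriv b = fun s => C₁ * (2 * Real.sinh s * Real.cosh s) := by
    funext s
    rw [hbfun]
    have h : HasDerivAt (fun s => C₁ * Real.cosh s ^ 2)
        (C₁ * (2 * Real.cosh s ^ 1 * Real.sinh s)) s := by
      exact ((Real.hasDerivAt_cosh s).pow 2).const_mul C₁
    rw [h.deriv]; ring
  have hinner : (fun s => (1 / (2 * b s)) * deriv b s)
      = fun s => Real.sinh s / Real.cosh s := by
    funext s
    rw [hderivb, hbfun]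
    field_simp
  intro η hη
  have hderiv2 : deriv (fun s => (1 / (2 * b s)) * deriv b s) η = 1 / Real.cosh η ^ 2 := by
    rw [hinner]
    have h : HasDerivAt (fun s => Real.sinh s / Real.cosh s)
        ((Real.cosh η * Real.cosh η - Real.sinh η * Real.sinh η) / Real.cosh η ^ 2) η :=
      (Real.hasDerivAt_sinh η).div (Real.hasDerivAt_cosh η) (hcosh η)
    rw [h.deriv]
    have hid := Real.cosh_sq_sub_sinh_sq η
    field_simp
    linear_combination hid
  rw [hderiv2, hderivb, hb η]
  have hc := hcosh η
  have hid := Real.cosh_sq_sub_sinh_sq η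
  field_simp
  linear_combination (-1 : ℝ) * hid
end
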